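/- (Proposition 3.3, convergence) The sequence (a(k))_{k≥0} converges, i.e. there exists a real number a with a(k) → a as k → ∞. -/
import Mathlib


/-- `pq n = (p n, q n)` where `p n` (resp. `q n`) is the probability that the
exploitative player X, always guessing `2` or `n-1`, wins the misère search game
`MS(P_n)` against the uniformly random player R when playing first (resp. second):
`p 0 = p 1 = 0`, `q 0 = 0`,
`q n = (1/n) * ∑_{i=1}^{n} ((i-1)·p(i-1) + (n-i)·p(n-i) + 1)/n` for `n ≥ 1`, and
`p n = 1/n + ((n-2)/n) * q (n-2)` for `n ≥ 2`. -/
noncomputable def pq : ℕ → ℝ × ℝ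
  | 0 => (0, 0)
  | 1 =>
    (0,
      (1 / ((1 : ℕ) : ℝ)) * ∑ i ∈ (Finset.Icc 1 1).attach,
        (((i.1 - 1 : ℕ) : ℝ) * (pq (i.1 - 1)).1 +
          ((1 - i.1 : ℕ) : ℝ) * (pq (1 - i.1)).1 + 1) / ((1 : ℕ) : ℝ))
  | n + 2 =>
    (1 / ((n : ℝ) + 2) + ((n : ℝ) / ((n : ℝ) + 2)) * (pq n).2,
      (1 / ((n : ℝ) + 2)) * ∑ i ∈ (Finset.Icc 1 (n + 2)).attach,
        (((i.1 - 1 : ℕ) : ℝ) * (pq (i.1 - 1)).1 +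
          ((n + 2 - i.1 : ℕ) : ℝ) * (pq (n + 2 - i.1)).1 + 1) / ((n : ℝ) + 2))
  decreasing_by
  · have hm := i.2; simp only [Finset.mem_Icc] at hm; omega
  · have hm := i.2; simp only [Finset.mem_Icc] at hm; omega
  · omega
  · have hm := i.2; simp only [Finset.mem_Icc] at hm; omega
  · have hm := i.2; simp only [Finset.mem_Icc] at hm; omega

/-- X's winning probability in `MS(P_n)` playing first. -/
noncomputable def p (n : ℕ) : ℝ := (pq n).1

/-- X's winning probability in `MS(P_n)` playing second. -/
noncomputable def q (n : ℕ) : ℝ := (pq n).2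

/-- `s n = ∑_{i=1}^{n} i * p i`. -/
noncomputable def s (n : ℕ) : ℝ := ∑ i ∈ Finset.Icc 1 n, (i : ℝ) * p i

/-- `a k = (s k + 2(k+1)) / (k² + 7k + 6)`. -/
noncomputable def a (k : ℕ) : ℝ :=
  (s k + 2 * ((k : ℝ) + 1)) / ((k : ℝ) ^ 2 + 7 * (k : ℝ) + 6)

/-- `b k` is the maximum absolute difference between any two of `a k, a (k+1), a (k+2)`. -/
noncomputable def b (k : ℕ) : ℝ :=
  max |a k - a (k + 1)| (max |a (k + 1) - a (k + 2)| |a k - a (k + 2)|)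
lemma p_rec (n : ℕ) : p (n+2) = 1/((n:ℝ)+2) + ((n:ℝ)/((n:ℝ)+2)) * q n := by
  rw [p, q, pq.eq_3]

lemma q_unfold (n : ℕ) :
    q (n+2) = (1 / ((n : ℝ) + 2)) * ∑ i ∈ Finset.Icc 1 (n + 2),
        (((i - 1 : ℕ) : ℝ) * p (i - 1) +
          ((n + 2 - i : ℕ) : ℝ) * p (n + 2 - i) + 1) / ((n : ℝ) + 2) := by
  rw [q, pq.eq_3]
  rw [Finset.sum_attach (Finset.Icc 1 (n+2)) (fun i => (((i - 1 : ℕ) : ℝ) * (pq (i - 1)).1 + ((n + 2 - i : ℕ) : ℝ) * (pq (n + 2 - i)).1 + 1) / ((n:ℝ)+2))]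
  rfl

lemma s_eq_range (n : ℕ) : s n = ∑ j ∈ Finset.range (n+1), (j:ℝ) * p j := by
  have h : Finset.range (n+1) = insert 0 (Finset.Icc 1 n) := by
    ext x; simp [Finset.mem_Icc]; omega
  rw [h, Finset.sum_insert (by simp), s]
  simp

lemma q_rec (m : ℕ) : q (m+2) = (2 * s (m+1) + ((m:ℝ)+2)) / ((m:ℝ)+2)^2 := by
  have key : ∑ i ∈ Finset.Icc 1 (m + 2),
      (((i - 1 : ℕ) : ℝ) * p (i - 1) + ((m + 2 - i : ℕ) : ℝ) * p (m + 2 - i) + 1)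
      = 2 * s (m+1) + ((m:ℝ)+2) := by
    have hIcc : Finset.Icc 1 (m+2) = Finset.Ico 1 (m+3) := by
      ext x; simp [Finset.mem_Icc, Finset.mem_Ico]; omega
    rw [hIcc, Finset.sum_Ico_eq_sum_range]
    have h2 : (m + 3 - 1) = m + 2 := by omega
    rw [h2]
    have hcong : ∀ j ∈ Finset.range (m + 2),
        (((1 + j - 1 : ℕ) : ℝ) * p (1 + j - 1) + ((m + 2 - (1 + j) : ℕ) : ℝ) * p (m + 2 - (1 + j)) + 1)
        = ((j : ℝ) * p j + ((m + 1 - j : ℕ) : ℝ) * p (m + 1 - j) + 1) := by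
      intro j hj
      have e1 : 1 + j - 1 = j := by omega
      have e2 : m + 2 - (1 + j) = m + 1 - j := by omega
      rw [e1, e2]
    rw [Finset.sum_congr rfl hcong]
    rw [Finset.sum_add_distrib, Finset.sum_add_distrib]
    have hrefl : ∑ j ∈ Finset.range (m+2), ((m + 1 - j : ℕ) : ℝ) * p (m + 1 - j)
        = ∑ j ∈ Finset.range (m+2), (j:ℝ) * p j := by
      have := Finset.sum_range_reflect (fun j => ((j : ℕ) : ℝ) * p j) (m+2)
      simpa using this
    rw [hrefl, ← s_eq_range]
    simp
    ring
  rw [q_unfold, ← Finset.sum_div, key]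
  rw [pow_two, ← div_div, one_div, inv_mul_eq_div]

lemma q_one : q 1 = 1 := by
  rw [q, pq.eq_2]
  rw [Finset.sum_attach (Finset.Icc 1 1) (fun i => (((i - 1 : ℕ) : ℝ) * (pq (i - 1)).1 + ((1 - i : ℕ) : ℝ) * (pq (1 - i)).1 + 1) / ((1:ℕ):ℝ))]
  norm_num [pq]

lemma s_zero : s 0 = 0 := by simp [s]

lemma s_succ (n : ℕ) : s (n+1) = s n + ((n:ℝ)+1) * p (n+1) := by
  rw [s, s, Finset.sum_Icc_succ_top (by omega)]
  push_cast; ring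

lemma q_formula (n : ℕ) : q (n+1) = (2 * s n + ((n:ℝ)+1)) / ((n:ℝ)+1)^2 := by
  cases n with
  | zero => rw [q_one, s_zero]; norm_num
  | succ m =>
    have := q_rec m
    push_cast
    push_cast at this
    convert this using 3 <;> ring

lemma s_rec (n : ℕ) : s (n+3) = s (n+2) + 1 + (2 * s n + ((n:ℝ)+1))/((n:ℝ)+1) := by
  have h1 : s (n+3) = s (n+2) + ((n:ℝ)+3) * p (n+3) := by
    have := s_succ (n+2); push_cast at this ⊢; linarith
  have h2 : p (n+3) = 1/((n:ℝ)+3) + (((n:ℝ)+1)/((n:ℝ)+3)) * q (n+1) := by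
    have := p_rec (n+1); push_cast at this ⊢; convert this using 2 <;> ring
  rw [h1, h2, q_formula]
  have h3 : ((n:ℝ)+1) ≠ 0 := by positivity
  have h4 : ((n:ℝ)+3) ≠ 0 := by positivity
  field_simp
  ring

lemma a_rec (n : ℕ) : a (n+3) =
    (((n:ℝ)+3)*((n:ℝ)+8) * a (n+2) + 2*((n:ℝ)+6) * a n) / (((n:ℝ)+4)*((n:ℝ)+9)) := by
  rw [a, a, a, s_rec]
  have h1 : ((n:ℝ)+1) ≠ 0 := by positivity
  have h2 : ((n:ℝ)+4) ≠ 0 := by positivity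
  have h9 : ((n:ℝ)+9) ≠ 0 := by positivity
  have e3 : (((n+3:ℕ)):ℝ) = (n:ℝ)+3 := by push_cast; ring
  have e2 : (((n+2:ℕ)):ℝ) = (n:ℝ)+2 := by push_cast; ring
  rw [e3, e2]
  have hd1 : ((n:ℝ)+3)^2 + 7*((n:ℝ)+3) + 6 = ((n:ℝ)+4)*((n:ℝ)+9) := by ring
  have hd2 : ((n:ℝ)+2)^2 + 7*((n:ℝ)+2) + 6 = ((n:ℝ)+3)*((n:ℝ)+8) := by ring
  have hd3 : ((n:ℝ))^2 + 7*((n:ℝ)) + 6 = ((n:ℝ)+1)*((n:ℝ)+6) := by ring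
  rw [hd1, hd2, hd3]
  have h3 : ((n:ℝ)+3) ≠ 0 := by positivity
  have h8 : ((n:ℝ)+8) ≠ 0 := by positivity
  have h6 : ((n:ℝ)+6) ≠ 0 := by positivity
  field_simp
  ring

/-- successive difference of `a`. -/
noncomputable def dd (n : ℕ) : ℝ := a (n+1) - a n

lemma dd_rec (n : ℕ) :
    dd (n+2) = -(2*((n:ℝ)+6)/(((n:ℝ)+4)*((n:ℝ)+9))) * (dd n + dd (n+1)) := by
  have h2 : ((n:ℝ)+4) ≠ 0 := by positivity
  have h9 : ((n:ℝ)+9) ≠ 0 := by positivity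
  rw [dd, dd, dd, show n+2+1 = n+3 from rfl, a_rec]
  field_simp
  ring

lemma dd_bound (n : ℕ) : |dd (n+4)| ≤ (1/4) * (|dd (n+2)| + |dd (n+3)|) := by
  have h := dd_rec (n+2)
  push_cast at h
  rw [show (n:ℝ)+2+6 = (n:ℝ)+8 by ring, show (n:ℝ)+2+4 = (n:ℝ)+6 by ring,
    show (n:ℝ)+2+9 = (n:ℝ)+11 by ring] at h
  have hn : (0:ℝ) ≤ (n:ℝ) := Nat.cast_nonneg n
  have hμ : 2*((n:ℝ)+8)/(((n:ℝ)+6)*((n:ℝ)+11)) ≤ 1/4 := by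
    rw [div_le_div_iff₀ (by positivity) (by norm_num)]
    nlinarith
  have hμ0 : 0 ≤ 2*((n:ℝ)+8)/(((n:ℝ)+6)*((n:ℝ)+11)) := by positivity
  calc |dd (n+4)| = (2*((n:ℝ)+8)/(((n:ℝ)+6)*((n:ℝ)+11))) * |dd (n+2) + dd (n+3)| := by
        rw [show n+4 = n+2+2 from rfl, h, abs_mul, abs_neg, abs_of_nonneg hμ0]
    _ ≤ (1/4) * |dd (n+2) + dd (n+3)| := by
        apply mul_le_mul_of_nonneg_right hμ (abs_nonneg _)
    _ ≤ (1/4) * (|dd (n+2)| + |dd (n+3)|) := by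
        have := abs_add_le (dd (n+2)) (dd (n+3)); linarith

/-- Lyapunov quantity. -/
noncomputable def E (n : ℕ) : ℝ := |dd (n+3)| + (1/2) * |dd (n+2)|

lemma E_contract (n : ℕ) : E (n+1) ≤ (3/4) * E n := by
  have h := dd_bound n
  have h1 := abs_nonneg (dd (n+2))
  have h2 := abs_nonneg (dd (n+3))
  rw [E, E, show n+1+3 = n+4 from rfl, show n+1+2 = n+3 from rfl]
  linarith

lemma E_nonneg (n : ℕ) : 0 ≤ E n := by
  have h1 := abs_nonneg (dd (n+2)); have h2 := abs_nonneg (dd (n+3))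
  rw [E]; linarith

lemma E_le (n : ℕ) : E n ≤ E 0 * (3/4)^n := by
  induction n with
  | zero => simp
  | succ m ih =>
    calc E (m+1) ≤ (3/4) * E m := E_contract m
      _ ≤ (3/4) * (E 0 * (3/4)^m) := by linarith [E_contract m]
      _ = E 0 * (3/4)^(m+1) := by ring

lemma dd_le (n : ℕ) : |dd (n+3)| ≤ E 0 * (3/4)^n := by
  have h := E_le n
  have h1 := abs_nonneg (dd (n+2))
  rw [E] at h; linarith

lemma dd_summable : Summable dd := by
  rw [← summable_nat_add_iff 3]
  rw [← summable_abs_iff]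
  apply Summable.of_nonneg_of_le (fun n => abs_nonneg _) dd_le
  exact (summable_geometric_of_lt_one (by norm_num) (by norm_num)).mul_left (E 0)

/-- Proposition 3.3 (convergence): the sequence `a` converges. -/
theorem a_converges : ∃ L : ℝ, Filter.Tendsto a Filter.atTop (nhds L) := by
  refine ⟨∑' n, dd n + a 0, ?_⟩
  have h : ∀ n, a n = (∑ i ∈ Finset.range n, dd i) + a 0 := by
    intro n
    have := Finset.sum_range_sub a n
    simp only [dd]
    linarith [this]
  have ht := dd_summable.hasSum.tendsto_sum_nat
  have := ht.add_const (a 0)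
  exact this.congr (fun n => (h n).symm)
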